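/- Let M be a compact metric space and φ : ℝ × M → M a continuous flow on M (φ continuous, φ(0,·) = id, φ(t+s,·) = φ(t,·) ∘ φ(s,·)); write φ^t(x) = φ(t,x). Assume the flow has no rest points, i.e. for every p ∈ M there exists t ∈ ℝ with φ^t(p) ≠ p. Then there exists ε > 0 such that for every x ∈ M and all t₁, t₂ ∈ (−ε, ε), the equality φ^{t₁}(x) = φ^{t₂}(x) implies t₁ = t₂; that is, for every x the orbit map t ↦ φ^t(x) is injective on the interval (−ε, ε), with ε uniform in x. -/

import Mathlib

private lemma flow_periodic_int {M : Type*} (φ : ℝ → M → M)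
    (hφ0 : ∀ x, φ 0 x = x) (hφadd : ∀ t s x, φ (t + s) x = φ t (φ s x))
    {s : ℝ} {y : M} (hs : φ s y = y) (k : ℤ) : φ ((k : ℝ) * s) y = y := by
  have hneg : φ (-s) y = y := by
    have h := hφadd (-s) s y
    rw [hs] at h
    simpa [hφ0] using h.symm
  induction k using Int.induction_on with
  | zero => simpa using hφ0 y
  | succ i ih =>
      push_cast at ih ⊢
      have h1 : ((i : ℝ) + 1) * s = s + (i : ℝ) * s := by ring
      rw [h1, hφadd, ih, hs]
  | pred i ih =>
      push_cast at ih ⊢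
      have h1 : ((-(i : ℝ)) - 1) * s = -s + (-(i : ℝ)) * s := by ring
      rw [h1, hφadd, ih, hneg]

/-- Uniform local injectivity of orbit maps (uniqueness statement in the proof of
Lemma 6.4): for a rest-point-free continuous flow on a compact metric space there is
`ε > 0`, uniform in `x`, such that `t ↦ φ t x` is injective on `(-ε, ε)`. -/
theorem orbit_map_locally_injective {M : Type*} [MetricSpace M] [CompactSpace M]
    (φ : ℝ → M → M)
    (hcont : Continuous fun q : ℝ × M => φ q.1 q.2)
    (hφ0 : ∀ x, φ 0 x = x)
    (hφadd : ∀ t s x, φ (t + s) x = φ t (φ s x))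
    (hnorest : ∀ p : M, ∃ t : ℝ, φ t p ≠ p) :
    ∃ ε : ℝ, 0 < ε ∧ ∀ x : M, ∀ t₁ ∈ Set.Ioo (-ε) ε, ∀ t₂ ∈ Set.Ioo (-ε) ε,
      φ t₁ x = φ t₂ x → t₁ = t₂ := by
  by_contra hcon
  push_neg at hcon
  choose x t₁ ht₁ t₂ ht₂ heq hne using fun n : ℕ =>
    hcon (1 / (n + 1)) (by positivity)
  set s : ℕ → ℝ := fun n => t₂ n - t₁ n with hs_def
  set y : ℕ → M := fun n => φ (t₁ n) (x n) with hy_def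
  have hsne : ∀ n, s n ≠ 0 := fun n => sub_ne_zero.mpr (Ne.symm (hne n))
  have hper : ∀ n, φ (s n) (y n) = y n := by
    intro n
    have hsum : s n + t₁ n = t₂ n := by simp [hs_def]
    calc φ (s n) (φ (t₁ n) (x n)) = φ (s n + t₁ n) (x n) := (hφadd _ _ _).symm
    _ = φ (t₂ n) (x n) := by rw [hsum]
    _ = φ (t₁ n) (x n) := (heq n).symm
  have hsbound : ∀ n : ℕ, |s n| ≤ 2 / (n + 1) := by
    intro n
    have h1 : |t₁ n| < 1 / (n + 1 : ℝ) := abs_lt.mpr ⟨(ht₁ n).1, (ht₁ n).2⟩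
    have h2 : |t₂ n| < 1 / (n + 1 : ℝ) := abs_lt.mpr ⟨(ht₂ n).1, (ht₂ n).2⟩
    calc |s n| ≤ |t₂ n| + |t₁ n| := abs_sub _ _
    _ ≤ 2 / (n + 1) := by
          have h3 : 2 / (n + 1 : ℝ) = 1 / (n + 1) + 1 / (n + 1) := by ring
          linarith
  have htwo : Filter.Tendsto (fun n : ℕ => 2 / (n + 1 : ℝ)) Filter.atTop (nhds 0) := by
    have := (tendsto_one_div_add_atTop_nhds_zero_nat : Filter.Tendsto (fun n : ℕ => 1 / ((n : ℝ) + 1)) Filter.atTop (nhds 0)).const_mul 2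
    simpa [mul_one_div, mul_zero, div_eq_mul_inv] using this
  have hs0 : Filter.Tendsto s Filter.atTop (nhds 0) :=
    squeeze_zero_norm (fun n => by simpa using hsbound n) htwo
  obtain ⟨p, -, σ, hσ, hyp⟩ := isCompact_univ.tendsto_subseq (fun n => Set.mem_univ (y n))
  obtain ⟨t, ht⟩ := hnorest p
  set a : ℕ → ℝ := fun n => (round (t / s (σ n)) : ℝ) * s (σ n) with ha_def
  have hpa : ∀ n, φ (a n) (y (σ n)) = y (σ n) := fun n =>
    flow_periodic_int φ hφ0 hφadd (hper (σ n)) _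
  have hstend : Filter.Tendsto (fun n => s (σ n)) Filter.atTop (nhds 0) :=
    hs0.comp hσ.tendsto_atTop
  have ha : Filter.Tendsto a Filter.atTop (nhds t) := by
    have h1 : ∀ n, ‖a n - t‖ ≤ |s (σ n)| := by
      intro n
      have hne' := hsne (σ n)
      have heq2 : a n - t = (round (t / s (σ n)) - t / s (σ n)) * s (σ n) := by
        simp only [ha_def]; rw [sub_mul, div_mul_cancel₀ _ hne']
      rw [Real.norm_eq_abs, heq2, abs_mul]
      calc |(round (t / s (σ n)) : ℝ) - t / s (σ n)| * |s (σ n)|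
          ≤ (1 / 2) * |s (σ n)| := by
            gcongr
            rw [abs_sub_comm]; exact abs_sub_round _
      _ ≤ |s (σ n)| := by nlinarith [abs_nonneg (s (σ n))]
    have habs : Filter.Tendsto (fun n => |s (σ n)|) Filter.atTop (nhds 0) := by
      simpa using hstend.abs
    have h2 := squeeze_zero_norm h1 habs
    have h3 := h2.add_const t
    simpa using h3
  have hlim : Filter.Tendsto (fun n => φ (a n) (y (σ n))) Filter.atTop (nhds (φ t p)) :=
    (hcont.tendsto (t, p)).comp (ha.prodMk_nhds hyp)
  have hlim2 : Filter.Tendsto (fun n => φ (a n) (y (σ n))) Filter.atTop (nhds p) := by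
    simpa [hpa, Function.comp_def] using hyp
  exact ht (tendsto_nhds_unique hlim hlim2)
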